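/- arXiv:2004.01762 — 3 statements merged into one kernel-verified Lean document; each statement's English description precedes it below -/
import Mathlib

section
/- On an oriented pseudo-Riemannian manifold of dimension n = 2k, the one-form ρ^Φ_i := (1/(2k−1)!) ε_i{}^{i₂…i_{2k}} Φ^{t₁…t_k}_{s₁…s_k} C_{t₁}{}^{s₁}{}_{i₂} W_{t₂}{}^{s₂}{}_{i₃i₄} ⋯ W_{t_k}{}^{s_k}{}_{i_{2k-1}i_{2k}} + (1/(2k)) ∇_i p_Φ(W) is conformally invariant of weight −2k: e^{2kΥ} ρ̂^Φ_i = ρ^Φ_i for ĝ = e^{2Υ}g. -/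
open scoped BigOperators

noncomputable def kron {n : ℕ} (i j : Fin n) : ℝ := if i = j then 1 else 0

/-- Components of the volume form in an oriented orthonormal frame. -/
noncomputable def vol {n : ℕ} (i : Fin n → Fin n) : ℝ :=
  Matrix.det (Matrix.of fun a b => kron (i a) b)

def d0 {k : ℕ} (a : Fin k) : Fin (2 * k) := ⟨2 * a.val, by have := a.isLt; omega⟩
def d1 {k : ℕ} (a : Fin k) : Fin (2 * k) := ⟨2 * a.val + 1, by have := a.isLt; omega⟩
def e1 {K : ℕ} (a : Fin K) : Fin (2 * K + 1) := ⟨2 * a.val + 1, by have := a.isLt; omega⟩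
def e2 {K : ℕ} (a : Fin K) : Fin (2 * K + 1) := ⟨2 * a.val + 2, by have := a.isLt; omega⟩

/-- The Pontrjagin potential
`p_Φ(W) = (1/(2k)!) ε^{i₁…i_{2k}} Φ^{t₁…t_k}_{s₁…s_k} W_{t₁}{}^{s₁}{}_{i₁i₂} ⋯ W_{t_k}{}^{s_k}{}_{i_{2k-1}i_{2k}}`
in dimension `2k` (orthonormal frame). -/
noncomputable def pPhi {k : ℕ}
    (Φ : (Fin k → Fin (2 * k)) → (Fin k → Fin (2 * k)) → ℝ)
    (W : Fin (2 * k) → Fin (2 * k) → Fin (2 * k) → Fin (2 * k) → ℝ) : ℝ :=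
  (1 / (Nat.factorial (2 * k) : ℝ)) *
    ∑ J : Fin (2 * k) → Fin (2 * k), vol J *
      ∑ t : Fin k → Fin (2 * k), ∑ s : Fin k → Fin (2 * k),
        Φ t s * ∏ a : Fin k, W (t a) (s a) (J (d0 a)) (J (d1 a))

/-- The one-form `ρ^Φ` of \eqref{eqn:rho-Phi} in dimension `n = 2k` (`k = K+1`),
from mixed Weyl components `W`, mixed Cotton components `C`, the volume factor `ε`,
and `Dp i = ∇_i p_Φ(W)`. -/
noncomputable def rhoPhi {K : ℕ}
    (Φ : (Fin (K + 1) → Fin (2 * (K + 1))) → (Fin (K + 1) → Fin (2 * (K + 1))) → ℝ)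
    (ε : (Fin (2 * (K + 1)) → Fin (2 * (K + 1))) → ℝ)
    (W : Fin (2 * (K + 1)) → Fin (2 * (K + 1)) → Fin (2 * (K + 1)) → Fin (2 * (K + 1)) → ℝ)
    (C : Fin (2 * (K + 1)) → Fin (2 * (K + 1)) → Fin (2 * (K + 1)) → ℝ)
    (Dp : Fin (2 * (K + 1)) → ℝ) (i : Fin (2 * (K + 1))) : ℝ :=
  (1 / (Nat.factorial (2 * K + 1) : ℝ)) *
    (∑ J : Fin (2 * K + 1) → Fin (2 * (K + 1)), ε (Fin.cons i J) *
      ∑ t : Fin (K + 1) → Fin (2 * (K + 1)), ∑ s : Fin (K + 1) → Fin (2 * (K + 1)),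
        Φ t s * C (t 0) (s 0) (J 0) *
          ∏ a : Fin K, W (t a.succ) (s a.succ) (J (e1 a)) (J (e2 a)))
  + (1 / (2 * ((K : ℝ) + 1))) * Dp i

/-! ### auxiliary lemmas on `vol` -/

lemma vol_eq_zero {n : ℕ} {L : Fin n → Fin n} {a b : Fin n} (hab : a ≠ b) (h : L a = L b) :
    vol L = 0 :=
  Matrix.det_zero_of_row_eq hab (by funext c; simp [Matrix.of_apply, kron, h])

lemma vol_comp_swap {n : ℕ} (L : Fin n → Fin n) (a b : Fin n) :
    vol (L ∘ ⇑(Equiv.swap a b)) = (if a = b then 1 else -1) * vol L := by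
  by_cases hab : a = b
  · subst hab
    simp [Equiv.swap_self, Function.comp_def, vol]
  · rw [if_neg hab]
    have h : (Matrix.of fun r c => kron ((L ∘ ⇑(Equiv.swap a b)) r) c)
        = (Matrix.of fun r c => kron (L r) c).submatrix (⇑(Equiv.swap a b)) id := rfl
    show (Matrix.of fun r c => kron ((L ∘ ⇑(Equiv.swap a b)) r) c).det = _
    rw [h, Matrix.det_permute, Equiv.Perm.sign_swap hab]
    show ((((-1 : ℤˣ) : ℤ) : ℝ)) * _ = _
    push_cast
    rfl

lemma kron_vol {n : ℕ} (u i : Fin n) (L : Fin n → Fin n) :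
    kron u i * vol L = ∑ m, kron u (L m) * vol (Function.update L m i) := by
  by_cases hinj : Function.Injective L
  · obtain ⟨m0, hm0⟩ := (Finite.injective_iff_surjective.mp hinj) i
    have hupd : Function.update L m0 i = L := by
      rw [← hm0]; exact Function.update_eq_self m0 L
    rw [Finset.sum_eq_single m0]
    · rw [hm0, hupd]
    · intro m _ hm
      by_cases hLm : u = L m
      · have hval : Function.update L m i m = Function.update L m i m0 := by
          rw [Function.update_self, Function.update_of_ne (Ne.symm hm), hm0]
        rw [vol_eq_zero hm hval, mul_zero]
      · simp [kron, hLm]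
    · intro h; exact absurd (Finset.mem_univ m0) h
  · rw [Function.not_injective_iff] at hinj
    obtain ⟨a, b, hLab, hab⟩ := hinj
    rw [vol_eq_zero hab hLab, mul_zero]
    have hswap : Function.update L b i = (Function.update L a i) ∘ ⇑(Equiv.swap a b) := by
      funext x
      by_cases hxa : x = a
      · subst hxa
        rw [Function.comp_apply, Equiv.swap_apply_left, Function.update_of_ne hab,
          Function.update_of_ne (Ne.symm hab), hLab]
      · by_cases hxb : x = b
        · subst hxb
          rw [Function.comp_apply, Equiv.swap_apply_right, Function.update_self,
            Function.update_self]
        · rw [Function.comp_apply, Equiv.swap_apply_of_ne_of_ne hxa hxb,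
            Function.update_of_ne hxb, Function.update_of_ne hxa]
    have hvol : vol (Function.update L b i) = - vol (Function.update L a i) := by
      rw [hswap, vol_comp_swap, if_neg hab]; ring
    symm
    calc ∑ m, kron u (L m) * vol (Function.update L m i)
        = ∑ m ∈ ({a, b} : Finset (Fin n)), kron u (L m) * vol (Function.update L m i) := by
          refine (Finset.sum_subset (Finset.subset_univ _) ?_).symm
          intro m _ hm
          simp only [Finset.mem_insert, Finset.mem_singleton, not_or] at hm
          have h1 : Function.update L m i a = Function.update L m i b := by
            rw [Function.update_of_ne (Ne.symm hm.1), Function.update_of_ne (Ne.symm hm.2), hLab]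
          rw [vol_eq_zero hab h1, mul_zero]
      _ = kron u (L a) * vol (Function.update L a i)
            + kron u (L b) * vol (Function.update L b i) := Finset.sum_pair hab
      _ = 0 := by rw [hvol, hLab]; ring

lemma delta_vol {n : ℕ} (x : Fin n → ℝ) (i : Fin n) (L : Fin n → Fin n) :
    x i * vol L = ∑ m, x (L m) * vol (Function.update L m i) := by
  have h1 : x i * vol L = ∑ u, x u * (kron u i * vol L) := by
    simp only [kron, mul_ite, mul_one, mul_zero, ite_mul, zero_mul, one_mul]
    rw [Finset.sum_ite_eq' Finset.univ i (fun u => x u * vol L)]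
    simp
  rw [h1]
  rw [Finset.sum_congr rfl fun u _ => by rw [kron_vol u i L, Finset.mul_sum]]
  rw [Finset.sum_comm]
  refine Finset.sum_congr rfl fun m _ => ?_
  simp only [kron, mul_ite, mul_one, mul_zero, ite_mul, zero_mul, one_mul]
  rw [Finset.sum_ite_eq' Finset.univ (L m) (fun u => x u * vol (Function.update L m i))]
  simp

/-! ### the `Q`-factor and its symmetries -/

noncomputable def Qfun {k : ℕ}
    (Φ : (Fin k → Fin (2 * k)) → (Fin k → Fin (2 * k)) → ℝ)
    (W : Fin (2 * k) → Fin (2 * k) → Fin (2 * k) → Fin (2 * k) → ℝ)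
    (N : Fin (2 * k) → Fin (2 * k)) : ℝ :=
  ∑ t : Fin k → Fin (2 * k), ∑ s : Fin k → Fin (2 * k),
    Φ t s * ∏ a : Fin k, W (t a) (s a) (N (d0 a)) (N (d1 a))

def precompEquiv {n : ℕ} {α : Type*} (π : Equiv.Perm (Fin n)) : (Fin n → α) ≃ (Fin n → α) where
  toFun L := L ∘ ⇑π
  invFun L := L ∘ ⇑π.symm
  left_inv L := by funext x; simp
  right_inv L := by funext x; simp

lemma sum_precomp {n : ℕ} {α : Type*} [Fintype α] [DecidableEq α]
    (π : Equiv.Perm (Fin n)) (F : (Fin n → α) → ℝ) :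
    ∑ t : Fin n → α, F t = ∑ t : Fin n → α, F (t ∘ ⇑π) :=
  (Equiv.sum_comp (precompEquiv π) F).symm

lemma d0_injective {k : ℕ} : Function.Injective (d0 (k := k)) := by
  intro a b h
  have := congrArg Fin.val h
  simp only [d0] at this
  exact Fin.ext (by omega)

lemma d1_injective {k : ℕ} : Function.Injective (d1 (k := k)) := by
  intro a b h
  have := congrArg Fin.val h
  simp only [d1] at this
  exact Fin.ext (by omega)

lemma d0_ne_d1 {k : ℕ} (a b : Fin k) : d0 a ≠ d1 b := by
  intro h
  have := congrArg Fin.val h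
  simp only [d0, d1] at this
  omega

lemma Qfun_comp_perm {k : ℕ}
    (Φ : (Fin k → Fin (2 * k)) → (Fin k → Fin (2 * k)) → ℝ)
    (hΦ : ∀ (σ : Equiv.Perm (Fin k)) t s, Φ (t ∘ σ) (s ∘ σ) = Φ t s)
    (W : Fin (2 * k) → Fin (2 * k) → Fin (2 * k) → Fin (2 * k) → ℝ)
    (σ : Equiv.Perm (Fin k)) (π : Equiv.Perm (Fin (2 * k)))
    (h0 : ∀ a, π (d0 a) = d0 (σ a)) (h1 : ∀ a, π (d1 a) = d1 (σ a))
    (N : Fin (2 * k) → Fin (2 * k)) :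
    Qfun Φ W (N ∘ ⇑π) = Qfun Φ W N := by
  have main : ∀ (t s : Fin k → Fin (2 * k)),
      Φ (t ∘ ⇑σ) (s ∘ ⇑σ) * ∏ a, W ((t ∘ ⇑σ) a) ((s ∘ ⇑σ) a) ((N ∘ ⇑π) (d0 a)) ((N ∘ ⇑π) (d1 a))
      = Φ t s * ∏ a, W (t a) (s a) (N (d0 a)) (N (d1 a)) := by
    intro t s
    rw [hΦ σ t s]
    congr 1
    calc ∏ a, W ((t ∘ ⇑σ) a) ((s ∘ ⇑σ) a) ((N ∘ ⇑π) (d0 a)) ((N ∘ ⇑π) (d1 a))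
        = ∏ a, (fun b => W (t b) (s b) (N (d0 b)) (N (d1 b))) (σ a) :=
          Finset.prod_congr rfl (fun a _ => by
            simp only [Function.comp_apply, h0, h1])
      _ = ∏ a, W (t a) (s a) (N (d0 a)) (N (d1 a)) := Equiv.prod_comp σ (fun b => W (t b) (s b) (N (d0 b)) (N (d1 b)))
  unfold Qfun
  rw [sum_precomp σ
    (fun t => ∑ s, Φ t s * ∏ a, W (t a) (s a) ((N ∘ ⇑π) (d0 a)) ((N ∘ ⇑π) (d1 a)))]
  refine Finset.sum_congr rfl fun t _ => ?_
  rw [sum_precomp σ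
    (fun s => Φ (t ∘ ⇑σ) s * ∏ a, W ((t ∘ ⇑σ) a) (s a) ((N ∘ ⇑π) (d0 a)) ((N ∘ ⇑π) (d1 a)))]
  exact Finset.sum_congr rfl fun s _ => main t s

/-! ### specific slot permutations in dimension `2(K+1)` -/

def pi0 (K : ℕ) (a0 : Fin (K + 1)) : Equiv.Perm (Fin (2 * (K + 1))) :=
  (Equiv.swap (d0 0) (d0 a0)) * (Equiv.swap (d1 0) (d1 a0))

lemma pi0_d0 (K : ℕ) (a0 a : Fin (K + 1)) :
    pi0 K a0 (d0 a) = d0 (Equiv.swap 0 a0 a) := by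
  show Equiv.swap (d0 0) (d0 a0) (Equiv.swap (d1 0) (d1 a0) (d0 a)) = _
  rw [Equiv.swap_apply_of_ne_of_ne (d0_ne_d1 a 0) (d0_ne_d1 a a0),
    d0_injective.swap_apply]

lemma pi0_d1 (K : ℕ) (a0 a : Fin (K + 1)) :
    pi0 K a0 (d1 a) = d1 (Equiv.swap 0 a0 a) := by
  show Equiv.swap (d0 0) (d0 a0) (Equiv.swap (d1 0) (d1 a0) (d1 a)) = _
  rw [d1_injective.swap_apply,
    Equiv.swap_apply_of_ne_of_ne (Ne.symm (d0_ne_d1 0 _)) (Ne.symm (d0_ne_d1 a0 _))]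

lemma vol_comp_pi0 (K : ℕ) (a0 : Fin (K + 1)) (L : Fin (2 * (K + 1)) → Fin (2 * (K + 1))) :
    vol (L ∘ ⇑(pi0 K a0)) = vol L := by
  have h : L ∘ ⇑(pi0 K a0)
      = (L ∘ ⇑(Equiv.swap (d0 0) (d0 a0))) ∘ ⇑(Equiv.swap (d1 0) (d1 a0)) := rfl
  rw [h, vol_comp_swap, vol_comp_swap]
  by_cases h0 : a0 = (0 : Fin (K + 1))
  · subst h0; simp
  · rw [if_neg (fun hh => h0 (d1_injective hh).symm), if_neg (fun hh => h0 (d0_injective hh).symm)]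
    ring

lemma Qfun_comp_pi0 (K : ℕ)
    (Φ : (Fin (K + 1) → Fin (2 * (K + 1))) → (Fin (K + 1) → Fin (2 * (K + 1))) → ℝ)
    (hΦ : ∀ (σ : Equiv.Perm (Fin (K + 1))) t s, Φ (t ∘ σ) (s ∘ σ) = Φ t s)
    (W : Fin (2 * (K + 1)) → Fin (2 * (K + 1)) → Fin (2 * (K + 1)) → Fin (2 * (K + 1)) → ℝ)
    (a0 : Fin (K + 1)) (N : Fin (2 * (K + 1)) → Fin (2 * (K + 1))) :
    Qfun Φ W (N ∘ ⇑(pi0 K a0)) = Qfun Φ W N :=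
  Qfun_comp_perm Φ hΦ W (Equiv.swap 0 a0) (pi0 K a0) (pi0_d0 K a0) (pi0_d1 K a0) N

lemma vol_comp_swap01 (K : ℕ) (L : Fin (2 * (K + 1)) → Fin (2 * (K + 1))) :
    vol (L ∘ ⇑(Equiv.swap (d0 (0 : Fin (K + 1))) (d1 0))) = - vol L := by
  rw [vol_comp_swap, if_neg (d0_ne_d1 0 0)]; ring

lemma Qfun_comp_swap01 (K : ℕ)
    (Φ : (Fin (K + 1) → Fin (2 * (K + 1))) → (Fin (K + 1) → Fin (2 * (K + 1))) → ℝ)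
    (W : Fin (2 * (K + 1)) → Fin (2 * (K + 1)) → Fin (2 * (K + 1)) → Fin (2 * (K + 1)) → ℝ)
    (hW2 : ∀ a b c d, W a b c d = - W a b d c)
    (N : Fin (2 * (K + 1)) → Fin (2 * (K + 1))) :
    Qfun Φ W (N ∘ ⇑(Equiv.swap (d0 (0 : Fin (K + 1))) (d1 0))) = - Qfun Φ W N := by
  have hsw0 : Equiv.swap (d0 (0 : Fin (K + 1))) (d1 0) (d0 (0 : Fin (K + 1))) = d1 0 :=
    Equiv.swap_apply_left _ _
  have hsw1 : Equiv.swap (d0 (0 : Fin (K + 1))) (d1 0) (d1 (0 : Fin (K + 1))) = d0 0 :=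
    Equiv.swap_apply_right _ _
  have hfix0 : ∀ a : Fin K, Equiv.swap (d0 (0 : Fin (K + 1))) (d1 0) (d0 a.succ) = d0 a.succ :=
    fun a => Equiv.swap_apply_of_ne_of_ne
      (fun h => Fin.succ_ne_zero a (d0_injective h)) (d0_ne_d1 _ _)
  have hfix1 : ∀ a : Fin K, Equiv.swap (d0 (0 : Fin (K + 1))) (d1 0) (d1 a.succ) = d1 a.succ :=
    fun a => Equiv.swap_apply_of_ne_of_ne
      (Ne.symm (d0_ne_d1 _ _)) (fun h => Fin.succ_ne_zero a (d1_injective h))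
  unfold Qfun
  rw [← Finset.sum_neg_distrib]
  refine Finset.sum_congr rfl fun t _ => ?_
  rw [← Finset.sum_neg_distrib]
  refine Finset.sum_congr rfl fun s _ => ?_
  have hprod : (∏ a : Fin (K + 1), W (t a) (s a)
        ((N ∘ ⇑(Equiv.swap (d0 (0 : Fin (K + 1))) (d1 0))) (d0 a))
        ((N ∘ ⇑(Equiv.swap (d0 (0 : Fin (K + 1))) (d1 0))) (d1 a)))
      = -(∏ a : Fin (K + 1), W (t a) (s a) (N (d0 a)) (N (d1 a))) := by
    rw [Fin.prod_univ_succ, Fin.prod_univ_succ]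
    simp only [Function.comp_apply, hsw0, hsw1, hfix0, hfix1]
    rw [hW2 (t 0) (s 0) (N (d1 0)) (N (d0 0))]
    ring
  rw [hprod]
  ring

/-! ### slot-permutation invariance of the contraction -/

lemma S_const (K : ℕ)
    (Φ : (Fin (K + 1) → Fin (2 * (K + 1))) → (Fin (K + 1) → Fin (2 * (K + 1))) → ℝ)
    (hΦ : ∀ (σ : Equiv.Perm (Fin (K + 1))) t s, Φ (t ∘ σ) (s ∘ σ) = Φ t s)
    (W : Fin (2 * (K + 1)) → Fin (2 * (K + 1)) → Fin (2 * (K + 1)) → Fin (2 * (K + 1)) → ℝ)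
    (hW2 : ∀ a b c d, W a b c d = - W a b d c)
    (Υ1 : Fin (2 * (K + 1)) → ℝ) (i m : Fin (2 * (K + 1))) :
    ∑ L : Fin (2 * (K + 1)) → Fin (2 * (K + 1)),
      Υ1 (L m) * vol (Function.update L m i) * Qfun Φ W L
    = ∑ L : Fin (2 * (K + 1)) → Fin (2 * (K + 1)),
      Υ1 (L (d0 0)) * vol (Function.update L (d0 0) i) * Qfun Φ W L := by
  have ha0lt : m.val / 2 < K + 1 := by have := m.isLt; omega
  set a0 : Fin (K + 1) := ⟨m.val / 2, ha0lt⟩ with ha0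
  obtain ⟨π, c, hπm, hc, hvol, hQ⟩ :
      ∃ (π : Equiv.Perm (Fin (2 * (K + 1)))) (c : ℝ), π m = d0 0 ∧ c * c = 1 ∧
        (∀ N : Fin (2 * (K + 1)) → Fin (2 * (K + 1)), vol (N ∘ ⇑π) = c * vol N) ∧
        (∀ N : Fin (2 * (K + 1)) → Fin (2 * (K + 1)), Qfun Φ W (N ∘ ⇑π) = c * Qfun Φ W N) := by
    rcases Nat.even_or_odd m.val with he | ho
    · have hm : m = d0 a0 := by
        apply Fin.ext
        simp only [d0, ha0]
        obtain ⟨r, hr⟩ := he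
        omega
      refine ⟨pi0 K a0, 1, ?_, by norm_num, fun N => by rw [vol_comp_pi0, one_mul],
        fun N => by rw [Qfun_comp_pi0 K Φ hΦ W a0 N, one_mul]⟩
      rw [hm, pi0_d0, Equiv.swap_apply_right]
    · have hm : m = d1 a0 := by
        apply Fin.ext
        simp only [d1, ha0]
        obtain ⟨r, hr⟩ := ho
        omega
      refine ⟨(Equiv.swap (d0 (0 : Fin (K + 1))) (d1 0)) * pi0 K a0, -1, ?_, by norm_num,
        fun N => ?_, fun N => ?_⟩
      · show Equiv.swap (d0 (0 : Fin (K + 1))) (d1 0) (pi0 K a0 m) = d0 0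
        rw [hm, pi0_d1, Equiv.swap_apply_right, Equiv.swap_apply_right]
      · show vol ((N ∘ ⇑(Equiv.swap (d0 (0 : Fin (K + 1))) (d1 0))) ∘ ⇑(pi0 K a0)) = -1 * vol N
        rw [vol_comp_pi0, vol_comp_swap01]; ring
      · show Qfun Φ W ((N ∘ ⇑(Equiv.swap (d0 (0 : Fin (K + 1))) (d1 0))) ∘ ⇑(pi0 K a0))
            = -1 * Qfun Φ W N
        rw [Qfun_comp_pi0 K Φ hΦ W a0, Qfun_comp_swap01 K Φ W hW2]; ring
  rw [sum_precomp π (fun L => Υ1 (L m) * vol (Function.update L m i) * Qfun Φ W L)]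
  refine Finset.sum_congr rfl fun M _ => ?_
  have h2 : Function.update (M ∘ ⇑π) m i = (Function.update M (d0 0) i) ∘ ⇑π := by
    rw [← hπm]
    exact (Function.update_comp_eq_of_injective M π.injective m i).symm
  have h1 : (M ∘ ⇑π) m = M (d0 0) := by rw [Function.comp_apply, hπm]
  rw [h1, h2, hvol, hQ]
  have : Υ1 (M (d0 0)) * (c * vol (Function.update M (d0 0) i)) * (c * Qfun Φ W M)
      = (c * c) * (Υ1 (M (d0 0)) * vol (Function.update M (d0 0) i) * Qfun Φ W M) := by ring
  rw [this, hc, one_mul]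

lemma pPhi_eq {k : ℕ}
    (Φ : (Fin k → Fin (2 * k)) → (Fin k → Fin (2 * k)) → ℝ)
    (W : Fin (2 * k) → Fin (2 * k) → Fin (2 * k) → Fin (2 * k) → ℝ) :
    pPhi Φ W = (1 / (Nat.factorial (2 * k) : ℝ)) *
      ∑ J : Fin (2 * k) → Fin (2 * k), vol J * Qfun Φ W J := rfl

/-! ### `Fin.cons` bookkeeping -/

def consE (K : ℕ) :
    (Fin (2 * (K + 1)) × (Fin (2 * K + 1) → Fin (2 * (K + 1))))
      ≃ (Fin (2 * (K + 1)) → Fin (2 * (K + 1))) where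
  toFun p := Fin.cons p.1 p.2
  invFun L := (L 0, fun j => L j.succ)
  left_inv p := by
    obtain ⟨u, J⟩ := p
    simp only [Fin.cons_zero, Fin.cons_succ]
  right_inv L := by
    funext x
    refine Fin.cases ?_ ?_ x
    · exact Fin.cons_zero _ _
    · exact fun j => Fin.cons_succ _ _ j

lemma hd00 (K : ℕ) : d0 (0 : Fin (K + 1)) = (0 : Fin (2 * K + 1 + 1)) := by
  apply Fin.ext; simp [d0]

lemma hd10 (K : ℕ) : d1 (0 : Fin (K + 1)) = Fin.succ (0 : Fin (2 * K + 1)) := by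
  apply Fin.ext; simp [d1]

lemma hd0succ (K : ℕ) (a : Fin K) : d0 (Fin.succ a) = Fin.succ (e1 a) := by
  apply Fin.ext; simp [d0, e1, Fin.val_succ]; omega

lemma hd1succ (K : ℕ) (a : Fin K) : d1 (Fin.succ a) = Fin.succ (e2 a) := by
  apply Fin.ext; simp [d1, e2, Fin.val_succ]; omega

lemma Qfun_cons (K : ℕ)
    (Φ : (Fin (K + 1) → Fin (2 * (K + 1))) → (Fin (K + 1) → Fin (2 * (K + 1))) → ℝ)
    (W : Fin (2 * (K + 1)) → Fin (2 * (K + 1)) → Fin (2 * (K + 1)) → Fin (2 * (K + 1)) → ℝ)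
    (u : Fin (2 * (K + 1))) (J : Fin (2 * K + 1) → Fin (2 * (K + 1))) :
    Qfun Φ W (Fin.cons u J)
      = ∑ t : Fin (K + 1) → Fin (2 * (K + 1)), ∑ s : Fin (K + 1) → Fin (2 * (K + 1)),
          Φ t s * (W (t 0) (s 0) u (J 0) *
            ∏ a : Fin K, W (t a.succ) (s a.succ) (J (e1 a)) (J (e2 a))) := by
  unfold Qfun
  refine Finset.sum_congr rfl fun t _ => Finset.sum_congr rfl fun s _ => ?_
  congr 1
  rw [Fin.prod_univ_succ]
  simp only [hd00, hd10, hd0succ, hd1succ, Fin.cons_zero, Fin.cons_succ]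

/-! ### the key contraction identity -/

lemma key (K : ℕ)
    (Φ : (Fin (K + 1) → Fin (2 * (K + 1))) → (Fin (K + 1) → Fin (2 * (K + 1))) → ℝ)
    (hΦ : ∀ (σ : Equiv.Perm (Fin (K + 1))) t s, Φ (t ∘ σ) (s ∘ σ) = Φ t s)
    (W : Fin (2 * (K + 1)) → Fin (2 * (K + 1)) → Fin (2 * (K + 1)) → Fin (2 * (K + 1)) → ℝ)
    (hW2 : ∀ a b c d, W a b c d = - W a b d c)
    (Υ1 : Fin (2 * (K + 1)) → ℝ) (i : Fin (2 * (K + 1))) :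
    ∑ J : Fin (2 * K + 1) → Fin (2 * (K + 1)), vol (Fin.cons i J) *
      ∑ t : Fin (K + 1) → Fin (2 * (K + 1)), ∑ s : Fin (K + 1) → Fin (2 * (K + 1)),
        Φ t s * (∑ u, W (t 0) (s 0) u (J 0) * Υ1 u) *
          ∏ a : Fin K, W (t a.succ) (s a.succ) (J (e1 a)) (J (e2 a))
    = (Nat.factorial (2 * K + 1) : ℝ) * (Υ1 i * pPhi Φ W) := by
  have hmain : Υ1 i * (∑ L : Fin (2 * (K + 1)) → Fin (2 * (K + 1)), vol L * Qfun Φ W L)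
      = ((2 * (K + 1) : ℕ) : ℝ) * ∑ L : Fin (2 * (K + 1)) → Fin (2 * (K + 1)),
          Υ1 (L (d0 0)) * vol (Function.update L (d0 0) i) * Qfun Φ W L := by
    calc Υ1 i * ∑ L : Fin (2 * (K + 1)) → Fin (2 * (K + 1)), vol L * Qfun Φ W L
        = ∑ L : Fin (2 * (K + 1)) → Fin (2 * (K + 1)), Υ1 i * vol L * Qfun Φ W L := by
          rw [Finset.mul_sum]
          exact Finset.sum_congr rfl fun L _ => (mul_assoc _ _ _).symm
      _ = ∑ L : Fin (2 * (K + 1)) → Fin (2 * (K + 1)),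
            (∑ m, Υ1 (L m) * vol (Function.update L m i)) * Qfun Φ W L := by
          refine Finset.sum_congr rfl fun L _ => ?_
          rw [delta_vol Υ1 i L]
      _ = ∑ L : Fin (2 * (K + 1)) → Fin (2 * (K + 1)),
            ∑ m, Υ1 (L m) * vol (Function.update L m i) * Qfun Φ W L := by
          refine Finset.sum_congr rfl fun L _ => ?_
          rw [Finset.sum_mul]
      _ = ∑ m, ∑ L : Fin (2 * (K + 1)) → Fin (2 * (K + 1)),
            Υ1 (L m) * vol (Function.update L m i) * Qfun Φ W L := Finset.sum_comm
      _ = ∑ _m : Fin (2 * (K + 1)), ∑ L : Fin (2 * (K + 1)) → Fin (2 * (K + 1)),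
            Υ1 (L (d0 0)) * vol (Function.update L (d0 0) i) * Qfun Φ W L :=
          Finset.sum_congr rfl fun m _ => S_const K Φ hΦ W hW2 Υ1 i m
      _ = _ := by
          rw [Finset.sum_const, Finset.card_univ, Fintype.card_fin, nsmul_eq_mul]
  have hcons : ∑ L : Fin (2 * (K + 1)) → Fin (2 * (K + 1)),
        Υ1 (L (d0 0)) * vol (Function.update L (d0 0) i) * Qfun Φ W L
      = ∑ J : Fin (2 * K + 1) → Fin (2 * (K + 1)), ∑ u,
          Υ1 u * (vol (Fin.cons i J) * Qfun Φ W (Fin.cons u J)) := by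
    rw [← Equiv.sum_comp (consE K)
      (fun L => Υ1 (L (d0 0)) * vol (Function.update L (d0 0) i) * Qfun Φ W L)]
    rw [Fintype.sum_prod_type]
    rw [Finset.sum_comm]
    refine Finset.sum_congr rfl fun J _ => Finset.sum_congr rfl fun u _ => ?_
    simp only [consE, Equiv.coe_fn_mk]
    rw [hd00, Fin.cons_zero, Fin.update_cons_zero]
    ring
  have hB : ∑ J : Fin (2 * K + 1) → Fin (2 * (K + 1)), vol (Fin.cons i J) *
        ∑ t : Fin (K + 1) → Fin (2 * (K + 1)), ∑ s : Fin (K + 1) → Fin (2 * (K + 1)),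
          Φ t s * (∑ u, W (t 0) (s 0) u (J 0) * Υ1 u) *
            ∏ a : Fin K, W (t a.succ) (s a.succ) (J (e1 a)) (J (e2 a))
      = ∑ J : Fin (2 * K + 1) → Fin (2 * (K + 1)), ∑ u,
          Υ1 u * (vol (Fin.cons i J) * Qfun Φ W (Fin.cons u J)) := by
    refine Finset.sum_congr rfl fun J _ => ?_
    have inner : (∑ t : Fin (K + 1) → Fin (2 * (K + 1)), ∑ s : Fin (K + 1) → Fin (2 * (K + 1)),
          Φ t s * (∑ u, W (t 0) (s 0) u (J 0) * Υ1 u) *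
            ∏ a : Fin K, W (t a.succ) (s a.succ) (J (e1 a)) (J (e2 a)))
        = ∑ u, Υ1 u * Qfun Φ W (Fin.cons u J) := by
      calc (∑ t : Fin (K + 1) → Fin (2 * (K + 1)), ∑ s : Fin (K + 1) → Fin (2 * (K + 1)),
            Φ t s * (∑ u, W (t 0) (s 0) u (J 0) * Υ1 u) *
              ∏ a : Fin K, W (t a.succ) (s a.succ) (J (e1 a)) (J (e2 a)))
          = ∑ t : Fin (K + 1) → Fin (2 * (K + 1)), ∑ s : Fin (K + 1) → Fin (2 * (K + 1)),
              ∑ u, Υ1 u * (Φ t s * (W (t 0) (s 0) u (J 0) *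
                ∏ a : Fin K, W (t a.succ) (s a.succ) (J (e1 a)) (J (e2 a)))) := by
            refine Finset.sum_congr rfl fun t _ => Finset.sum_congr rfl fun s _ => ?_
            rw [Finset.mul_sum, Finset.sum_mul]
            exact Finset.sum_congr rfl fun u _ => by ring
        _ = ∑ u, ∑ t : Fin (K + 1) → Fin (2 * (K + 1)), ∑ s : Fin (K + 1) → Fin (2 * (K + 1)),
              Υ1 u * (Φ t s * (W (t 0) (s 0) u (J 0) *
                ∏ a : Fin K, W (t a.succ) (s a.succ) (J (e1 a)) (J (e2 a)))) := by
            rw [Finset.sum_congr rfl fun t (_ : t ∈ Finset.univ) => Finset.sum_comm]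
            exact Finset.sum_comm
        _ = ∑ u, Υ1 u * Qfun Φ W (Fin.cons u J) := by
            refine Finset.sum_congr rfl fun u _ => ?_
            rw [Qfun_cons, Finset.mul_sum]
            refine Finset.sum_congr rfl fun t _ => ?_
            rw [Finset.mul_sum]
    rw [inner, Finset.mul_sum]
    exact Finset.sum_congr rfl fun u _ => by ring
  rw [hB, ← hcons, pPhi_eq]
  have hfact : (Nat.factorial (2 * (K + 1)) : ℝ)
      = ((2 * (K + 1) : ℕ) : ℝ) * (Nat.factorial (2 * K + 1) : ℝ) := by
    have h : 2 * (K + 1) = (2 * K + 1) + 1 := by omega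
    rw [h, Nat.factorial_succ]
    push_cast
    ring
  have hc2 : ((2 * (K + 1) : ℕ) : ℝ) ≠ 0 := Nat.cast_ne_zero.mpr (by omega)
  have hfne : (Nat.factorial (2 * K + 1) : ℝ) ≠ 0 :=
    Nat.cast_ne_zero.mpr (Nat.factorial_ne_zero _)
  rw [hfact]
  have hswap : (Nat.factorial (2 * K + 1) : ℝ) * (Υ1 i *
      ((1 / (((2 * (K + 1) : ℕ) : ℝ) * (Nat.factorial (2 * K + 1) : ℝ))) *
        ∑ J : Fin (2 * (K + 1)) → Fin (2 * (K + 1)), vol J * Qfun Φ W J))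
      = (1 / ((2 * (K + 1) : ℕ) : ℝ)) * (Υ1 i *
          ∑ J : Fin (2 * (K + 1)) → Fin (2 * (K + 1)), vol J * Qfun Φ W J) := by
    field_simp
  rw [hswap, hmain]
  field_simp

/-- conformal invariance of `ρ^Φ` in dimension `n = 2k` (`k = K+1`)
on an oriented pseudo-Riemannian manifold: `e^{2kΥ} ρ̂^Φ_i = ρ^Φ_i`.  Pointwise in
an oriented orthonormal frame, the hatted quantities are computed from
`ĝ = e^{2Υ}g` via the exact transformation laws
`ε̂_i{}^{i₂…i_{2k}} = e^{(2−2k)Υ} ε_i{}^{i₂…i_{2k}}`,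
`Ĉ_t{}^s{}_a = e^{−2Υ}(C_t{}^s{}_a + W_t{}^{su}{}_a Υ_u)`,
`Ŵ_t{}^s{}_{ab} = W_t{}^s{}_{ab}` and
`∇̂_i p_Φ(Ŵ) = e^{−2kΥ}(∇_i p_Φ(W) − 2kΥ_i p_Φ(W))`. -/
theorem rhoPhi_conformally_invariant (K : ℕ)
    (Φ : (Fin (K + 1) → Fin (2 * (K + 1))) → (Fin (K + 1) → Fin (2 * (K + 1))) → ℝ)
    (hΦ : ∀ (σ : Equiv.Perm (Fin (K + 1))) t s, Φ (t ∘ σ) (s ∘ σ) = Φ t s)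
    (W : Fin (2 * (K + 1)) → Fin (2 * (K + 1)) → Fin (2 * (K + 1)) → Fin (2 * (K + 1)) → ℝ)
    (hW1 : ∀ a b c d, W a b c d = - W b a c d)
    (hW2 : ∀ a b c d, W a b c d = - W a b d c)
    (hW3 : ∀ a b c d, W a b c d = W c d a b)
    (hWB : ∀ a b c d, W a b c d + W b c a d + W c a b d = 0)
    (hWtf : ∀ a c, ∑ s, W a s c s = 0)
    (C : Fin (2 * (K + 1)) → Fin (2 * (K + 1)) → Fin (2 * (K + 1)) → ℝ)
    (hC : ∀ a b c, C a b c = - C b a c)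
    (Υ : ℝ) (Υ1 : Fin (2 * (K + 1)) → ℝ)
    (Dp : Fin (2 * (K + 1)) → ℝ) :
    ∀ i, Real.exp (2 * ((K : ℝ) + 1) * Υ) *
      rhoPhi (K := K) Φ
        (fun J => Real.exp ((2 - 2 * ((K : ℝ) + 1)) * Υ) * vol J)
        W
        (fun a b c => Real.exp (-2 * Υ) * (C a b c + ∑ u, W a b u c * Υ1 u))
        (fun i' => Real.exp (-2 * ((K : ℝ) + 1) * Υ) *
          (Dp i' - 2 * ((K : ℝ) + 1) * Υ1 i' * pPhi (k := K + 1) Φ W)) i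
      = rhoPhi (K := K) Φ vol W C Dp i := by
  intro i
  simp only [rhoPhi]
  have hE12 : Real.exp (2 * ((K : ℝ) + 1) * Υ) *
      (Real.exp ((2 - 2 * ((K : ℝ) + 1)) * Υ) * Real.exp (-2 * Υ)) = 1 := by
    rw [← Real.exp_add, ← Real.exp_add,
      show (2 * ((K : ℝ) + 1) * Υ) + ((2 - 2 * ((K : ℝ) + 1)) * Υ + -2 * Υ) = 0 by ring,
      Real.exp_zero]
  have hE3 : Real.exp (2 * ((K : ℝ) + 1) * Υ) * Real.exp (-2 * ((K : ℝ) + 1) * Υ) = 1 := by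
    rw [← Real.exp_add,
      show (2 * ((K : ℝ) + 1) * Υ) + (-2 * ((K : ℝ) + 1) * Υ) = 0 by ring,
      Real.exp_zero]
  have hfne : (Nat.factorial (2 * K + 1) : ℝ) ≠ 0 :=
    Nat.cast_ne_zero.mpr (Nat.factorial_ne_zero _)
  have hB : (1 / (Nat.factorial (2 * K + 1) : ℝ)) *
      (∑ J : Fin (2 * K + 1) → Fin (2 * (K + 1)), vol (Fin.cons i J) *
        ∑ t : Fin (K + 1) → Fin (2 * (K + 1)), ∑ s : Fin (K + 1) → Fin (2 * (K + 1)),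
          Φ t s * (∑ u, W (t 0) (s 0) u (J 0) * Υ1 u) *
            ∏ a : Fin K, W (t a.succ) (s a.succ) (J (e1 a)) (J (e2 a)))
      = Υ1 i * pPhi Φ W := by
    rw [key K Φ hΦ W hW2 Υ1 i, one_div, inv_mul_cancel_left₀ hfne]
  have inner1 : ∀ J : Fin (2 * K + 1) → Fin (2 * (K + 1)),
      (∑ t : Fin (K + 1) → Fin (2 * (K + 1)), ∑ s : Fin (K + 1) → Fin (2 * (K + 1)),
        Φ t s * (Real.exp (-2 * Υ) * (C (t 0) (s 0) (J 0) +
            ∑ u, W (t 0) (s 0) u (J 0) * Υ1 u)) *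
          ∏ a : Fin K, W (t a.succ) (s a.succ) (J (e1 a)) (J (e2 a)))
      = Real.exp (-2 * Υ) *
        ((∑ t : Fin (K + 1) → Fin (2 * (K + 1)), ∑ s : Fin (K + 1) → Fin (2 * (K + 1)),
            Φ t s * C (t 0) (s 0) (J 0) *
              ∏ a : Fin K, W (t a.succ) (s a.succ) (J (e1 a)) (J (e2 a)))
        + (∑ t : Fin (K + 1) → Fin (2 * (K + 1)), ∑ s : Fin (K + 1) → Fin (2 * (K + 1)),
            Φ t s * (∑ u, W (t 0) (s 0) u (J 0) * Υ1 u) *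
              ∏ a : Fin K, W (t a.succ) (s a.succ) (J (e1 a)) (J (e2 a)))) := by
    intro J
    calc (∑ t : Fin (K + 1) → Fin (2 * (K + 1)), ∑ s : Fin (K + 1) → Fin (2 * (K + 1)),
          Φ t s * (Real.exp (-2 * Υ) * (C (t 0) (s 0) (J 0) +
              ∑ u, W (t 0) (s 0) u (J 0) * Υ1 u)) *
            ∏ a : Fin K, W (t a.succ) (s a.succ) (J (e1 a)) (J (e2 a)))
        = ∑ t : Fin (K + 1) → Fin (2 * (K + 1)), ∑ s : Fin (K + 1) → Fin (2 * (K + 1)),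
            (Real.exp (-2 * Υ) * (Φ t s * C (t 0) (s 0) (J 0) *
              ∏ a : Fin K, W (t a.succ) (s a.succ) (J (e1 a)) (J (e2 a)))
            + Real.exp (-2 * Υ) * (Φ t s * (∑ u, W (t 0) (s 0) u (J 0) * Υ1 u) *
              ∏ a : Fin K, W (t a.succ) (s a.succ) (J (e1 a)) (J (e2 a)))) :=
          Finset.sum_congr rfl fun t _ => Finset.sum_congr rfl fun s _ => by ring
      _ = _ := by
          simp only [Finset.sum_add_distrib, ← Finset.mul_sum]
          rw [← mul_add]
  have hJ : ∑ J : Fin (2 * K + 1) → Fin (2 * (K + 1)),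
        Real.exp ((2 - 2 * ((K : ℝ) + 1)) * Υ) * vol (Fin.cons i J) *
        ∑ t : Fin (K + 1) → Fin (2 * (K + 1)), ∑ s : Fin (K + 1) → Fin (2 * (K + 1)),
          Φ t s * (Real.exp (-2 * Υ) * (C (t 0) (s 0) (J 0) +
              ∑ u, W (t 0) (s 0) u (J 0) * Υ1 u)) *
            ∏ a : Fin K, W (t a.succ) (s a.succ) (J (e1 a)) (J (e2 a))
      = Real.exp ((2 - 2 * ((K : ℝ) + 1)) * Υ) * Real.exp (-2 * Υ) *
        ((∑ J : Fin (2 * K + 1) → Fin (2 * (K + 1)), vol (Fin.cons i J) *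
          ∑ t : Fin (K + 1) → Fin (2 * (K + 1)), ∑ s : Fin (K + 1) → Fin (2 * (K + 1)),
            Φ t s * C (t 0) (s 0) (J 0) *
              ∏ a : Fin K, W (t a.succ) (s a.succ) (J (e1 a)) (J (e2 a)))
        + (∑ J : Fin (2 * K + 1) → Fin (2 * (K + 1)), vol (Fin.cons i J) *
          ∑ t : Fin (K + 1) → Fin (2 * (K + 1)), ∑ s : Fin (K + 1) → Fin (2 * (K + 1)),
            Φ t s * (∑ u, W (t 0) (s 0) u (J 0) * Υ1 u) *
              ∏ a : Fin K, W (t a.succ) (s a.succ) (J (e1 a)) (J (e2 a)))) := by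
    conv_rhs => rw [mul_add, Finset.mul_sum, Finset.mul_sum, ← Finset.sum_add_distrib]
    refine Finset.sum_congr rfl fun J _ => ?_
    rw [inner1 J]
    ring
  rw [hJ]
  have hk : (2 * ((K : ℝ) + 1)) ≠ 0 := by positivity
  have h2k : (1 / (2 * ((K : ℝ) + 1))) * (2 * ((K : ℝ) + 1)) = 1 := by
    rw [one_div, inv_mul_cancel₀ hk]
  linear_combination
    ((1 / (Nat.factorial (2 * K + 1) : ℝ)) *
        (∑ J : Fin (2 * K + 1) → Fin (2 * (K + 1)), vol (Fin.cons i J) *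
          ∑ t : Fin (K + 1) → Fin (2 * (K + 1)), ∑ s : Fin (K + 1) → Fin (2 * (K + 1)),
            Φ t s * C (t 0) (s 0) (J 0) *
              ∏ a : Fin K, W (t a.succ) (s a.succ) (J (e1 a)) (J (e2 a)))
      + (1 / (Nat.factorial (2 * K + 1) : ℝ)) *
        (∑ J : Fin (2 * K + 1) → Fin (2 * (K + 1)), vol (Fin.cons i J) *
          ∑ t : Fin (K + 1) → Fin (2 * (K + 1)), ∑ s : Fin (K + 1) → Fin (2 * (K + 1)),
            Φ t s * (∑ u, W (t 0) (s 0) u (J 0) * Υ1 u) *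
              ∏ a : Fin K, W (t a.succ) (s a.succ) (J (e1 a)) (J (e2 a)))) * hE12
    + ((1 / (2 * ((K : ℝ) + 1))) * Dp i
        - (1 / (2 * ((K : ℝ) + 1))) * (2 * ((K : ℝ) + 1)) * (Υ1 i * pPhi Φ W)) * hE3
    + hB
    - (Υ1 i * pPhi Φ W) * h2k
end

section
/- On a pseudo-Riemannian manifold of dimension n, the generalized Einstein (Lovelock) tensor (E^{(k)})_i^j := (1/k!) δ^{j j₁…j_{2k}}_{i i₁…i_{2k}} R_{j₁j₂}{}^{i₁i₂} ⋯ R_{j_{2k-1}j_{2k}}{}^{i_{2k-1}i_{2k}} is symmetric (after lowering an index) and divergence-free: ∇^j E^{(k)}_{ij} = 0. Moreover its trace equals (n−2k) Pf^{(k)}(Rm), where Pf^{(k)}(Rm) := (1/k!) δ^{j₁…j_{2k}}_{i₁…i_{2k}} R_{j₁j₂}{}^{i₁i₂} ⋯ R_{j_{2k-1}j_{2k}}{}^{i_{2k-1}i_{2k}}. -/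
open scoped BigOperators

noncomputable def gdelta {n m : ℕ} (j i : Fin m → Fin n) : ℝ :=
  Matrix.det (Matrix.of fun a b => kron (j a) (i b))

lemma kron_comm {n : ℕ} (i j : Fin n) : kron i j = kron j i := by
  unfold kron; simp [eq_comm]

lemma gdelta_swap {n m : ℕ} (j i : Fin m → Fin n) : gdelta j i = gdelta i j := by
  unfold gdelta
  rw [← Matrix.det_transpose]
  congr 1
  ext a b
  simp [Matrix.transpose_apply, kron_comm]

lemma gdelta_perm {n m : ℕ} (σ : Equiv.Perm (Fin m)) (j i : Fin m → Fin n) :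
    gdelta (j ∘ σ) i = (Equiv.Perm.sign σ : ℝ) * gdelta j i := by
  unfold gdelta
  have : (Matrix.of fun a b => kron ((j ∘ σ) a) (i b))
      = (Matrix.of fun a b => kron (j a) (i b)).submatrix σ id := rfl
  rw [this, Matrix.det_permute]

lemma sum_cons_eq {n m : ℕ} (g : (Fin (m+1) → Fin n) → ℝ) :
    ∑ f : Fin (m+1) → Fin n, g f = ∑ x : Fin n, ∑ t : Fin m → Fin n, g (Fin.cons x t) := by
  rw [show (∑ x : Fin n, ∑ t : Fin m → Fin n, g (Fin.cons x t))
      = ∑ p : Fin n × (Fin m → Fin n), g (Fin.cons p.1 p.2) from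
    (Fintype.sum_prod_type (f := fun p : Fin n × (Fin m → Fin n) => g (Fin.cons p.1 p.2))).symm]
  exact (Fintype.sum_equiv (Fin.consEquiv fun _ => Fin n)
    (fun p => g (Fin.cons p.1 p.2)) g (fun p => rfl)).symm

lemma kron_self {n : ℕ} (x : Fin n) : kron x x = 1 := by simp [kron]

lemma col_perm {n m : ℕ} (b : Fin (m+1)) (is : Fin (m+1) → Fin n) (c : Fin (m+1)) :
    Fin.cons (n := m+1) (α := fun _ => Fin n) (is b) is ((b.succ).succAbove c)
      = is ((Fin.cycleRange b)⁻¹ c) := by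
  rcases Nat.lt_or_ge b.val c.val with h | h
  · have h1 : (Fin.cycleRange b)⁻¹ c = c := by
      rw [Equiv.Perm.inv_def, Equiv.symm_apply_eq, Fin.cycleRange_of_gt (by exact h)]
    have h2 : (b.succ).succAbove c = c.succ :=
      Fin.succAbove_of_le_castSucc _ _ (by simp [Fin.le_def]; omega)
    rw [h1, h2, Fin.cons_succ]
  · have h2 : (b.succ).succAbove c = c.castSucc :=
      Fin.succAbove_of_castSucc_lt _ _ (by simp [Fin.lt_def]; omega)
    rw [h2]
    rcases Nat.eq_zero_or_pos c.val with h0 | h0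
    · have hc : c.castSucc = 0 := by simp [Fin.ext_iff, h0]
      have h1 : (Fin.cycleRange b)⁻¹ c = b := by
        rw [Equiv.Perm.inv_def, Equiv.symm_apply_eq, Fin.cycleRange_self]
        simp [Fin.ext_iff, h0]
      rw [hc, h1, Fin.cons_zero]
    · have hcm : c.val - 1 < m + 1 := by omega
      have h1 : (Fin.cycleRange b)⁻¹ c = ⟨c.val - 1, hcm⟩ := by
        rw [Equiv.Perm.inv_def, Equiv.symm_apply_eq,
          Fin.cycleRange_of_lt (by simp only [Fin.lt_def]; omega)]
        apply Fin.ext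
        rw [Fin.val_add_one_of_lt (by simp only [Fin.lt_def, Fin.val_last]; omega)]
        simp; omega
      have hc : c.castSucc = Fin.succ ⟨c.val - 1, hcm⟩ := by
        apply Fin.ext; simp; omega
      rw [hc, h1, Fin.cons_succ]

lemma det_col_cycle {n m : ℕ} (b : Fin (m+1)) (js is : Fin (m+1) → Fin n) :
    Matrix.det (Matrix.of fun a c => kron (js a) (is ((Fin.cycleRange b)⁻¹ c)))
      = (-1 : ℝ)^(b.val) * gdelta js is := by
  have heq : (Matrix.of fun a c => kron (js a) (is ((Fin.cycleRange b)⁻¹ c)))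
      = (Matrix.of fun a c => kron (js a) (is c)).submatrix id ⇑((Fin.cycleRange b)⁻¹) := rfl
  rw [heq, Matrix.det_permute']
  unfold gdelta
  congr 1
  rw [Equiv.Perm.sign_inv, Fin.sign_cycleRange]
  push_cast
  ring

lemma sum_kron_pick {n : ℕ} (y : Fin n) (D : Fin n → ℝ) :
    ∑ x : Fin n, kron x y * D x = D y := by
  have h : ∀ x : Fin n, kron x y * D x = if x = y then D x else 0 := by
    intro x; unfold kron; split <;> simp
  rw [Finset.sum_congr rfl (fun x _ => h x), Finset.sum_ite_eq' Finset.univ y D]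
  simp

lemma contract {n m : ℕ} (js is : Fin m → Fin n) :
    ∑ x : Fin n, gdelta (Fin.cons x js) (Fin.cons x is)
      = ((n : ℝ) - (m : ℝ)) * gdelta js is := by
  have expand : ∀ x : Fin n, gdelta (Fin.cons x js) (Fin.cons x is)
      = gdelta js is + ∑ b : Fin m, (-1 : ℝ)^(b.val+1) *
          (kron x (is b) *
            Matrix.det (Matrix.of fun a c =>
              kron (js a) (Fin.cons (n := m) (α := fun _ => Fin n) x is ((b.succ).succAbove c)))) := by
    intro x
    unfold gdelta
    rw [Matrix.det_succ_row_zero, Fin.sum_univ_succ]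
    congr 1
    · simp only [Matrix.of_apply, Fin.cons_zero, kron_self, Fin.val_zero, pow_zero, one_mul,
        mul_one]
      congr 1
      all_goals ext a c
      all_goals simp [Matrix.submatrix_apply, Fin.zero_succAbove, Fin.cons_succ]
    · apply Finset.sum_congr rfl
      intro b _
      simp only [Matrix.of_apply, Fin.cons_zero, Fin.cons_succ, Fin.val_succ]
      rw [show ((Matrix.of fun p q : Fin (m+1) =>
              kron (Fin.cons (n := m) (α := fun _ => Fin n) x js p)
                (Fin.cons (n := m) (α := fun _ => Fin n) x is q)).submatrix
            Fin.succ b.succ.succAbove)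
          = (Matrix.of fun a c =>
              kron (js a) (Fin.cons (n := m) (α := fun _ => Fin n) x is ((b.succ).succAbove c)))
          from by ext a c; simp [Matrix.submatrix_apply, Fin.cons_succ]]
      ring
  rw [Finset.sum_congr rfl (fun x _ => expand x), Finset.sum_add_distrib]
  rw [Finset.sum_const, Finset.card_univ, Fintype.card_fin, Finset.sum_comm]
  have hrow : ∀ b : Fin m,
      ∑ x : Fin n, (-1 : ℝ)^(b.val+1) *
          (kron x (is b) *
            Matrix.det (Matrix.of fun a c =>
              kron (js a) (Fin.cons (n := m) (α := fun _ => Fin n) x is ((b.succ).succAbove c))))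
      = - gdelta js is := by
    cases m with
    | zero => exact fun b => absurd b.isLt (by omega)
    | succ m' =>
      intro b
      rw [← Finset.mul_sum]
      rw [sum_kron_pick (is b) (fun x => Matrix.det (Matrix.of fun a c =>
            kron (js a) (Fin.cons (n := m'+1) (α := fun _ => Fin n) x is ((b.succ).succAbove c))))]
      rw [show (Matrix.of fun a c =>
            kron (js a) (Fin.cons (n := m'+1) (α := fun _ => Fin n) (is b) is ((b.succ).succAbove c)))
          = (Matrix.of fun a c => kron (js a) (is ((Fin.cycleRange b)⁻¹ c))) from by
        ext a c; rw [Matrix.of_apply, Matrix.of_apply, col_perm]]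
      rw [det_col_cycle]
      have hs : (-1 : ℝ)^(b.val+1) * (-1 : ℝ)^(b.val) = -1 := by
        rw [← pow_add, show b.val+1+b.val = 2*b.val+1 by omega, pow_succ, pow_mul]
        norm_num
      calc (-1 : ℝ)^(b.val+1) * ((-1 : ℝ)^(b.val) * gdelta js is)
          = ((-1 : ℝ)^(b.val+1) * (-1 : ℝ)^(b.val)) * gdelta js is := by ring
        _ = - gdelta js is := by rw [hs]; ring
  rw [Finset.sum_congr rfl (fun b _ => hrow b), Finset.sum_const, Finset.card_univ,
    Fintype.card_fin]
  push_cast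
  ring

lemma pull_const {α β : Type*} [Fintype α] [Fintype β] (c : ℝ) (g : α → β → ℝ) :
    ∑ a : α, ∑ b : β, c * g a b = c * ∑ a : α, ∑ b : β, g a b := by
  simp [Finset.mul_sum]

lemma cycle_vanish {n N : ℕ} (DR3 : Fin n → Fin n → Fin n → ℝ)
    (hB : ∀ a b c, DR3 a b c + DR3 b c a + DR3 c a b = 0)
    (g : Fin (N+1) → Fin n) (P : (Fin (N+1) → Fin n) → ℝ)
    (s0 s1 : Fin (N+1)) (h0s0 : s0 ≠ 0) (h0s1 : s1 ≠ 0) (hs0s1 : s0 ≠ s1)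
    (hPfix : ∀ f : Fin (N+1) → Fin n,
      P (f ∘ ⇑(Equiv.swap 0 s0 * Equiv.swap s0 s1)) = P f) :
    ∑ f : Fin (N+1) → Fin n, gdelta f g * (DR3 (f 0) (f s0) (f s1) * P f) = 0 := by
  set c : Equiv.Perm (Fin (N+1)) := Equiv.swap 0 s0 * Equiv.swap s0 s1 with hcdef
  have hP' : ∀ f : Fin (N+1) → Fin n, P (f ∘ ⇑c) = P f := fun f => hPfix f
  have hc0 : c 0 = s0 := by
    rw [hcdef, Equiv.Perm.mul_apply,
      Equiv.swap_apply_of_ne_of_ne (Ne.symm h0s0) (Ne.symm h0s1), Equiv.swap_apply_left]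
  have hcs0 : c s0 = s1 := by
    rw [hcdef, Equiv.Perm.mul_apply, Equiv.swap_apply_left,
      Equiv.swap_apply_of_ne_of_ne h0s1 (Ne.symm hs0s1)]
  have hcs1 : c s1 = 0 := by
    rw [hcdef, Equiv.Perm.mul_apply, Equiv.swap_apply_right, Equiv.swap_apply_right]
  have hsign : Equiv.Perm.sign c = 1 := by
    rw [hcdef, map_mul, Equiv.Perm.sign_swap (Ne.symm h0s0), Equiv.Perm.sign_swap hs0s1]
    norm_num
  have hdelta : ∀ f : Fin (N+1) → Fin n, gdelta (f ∘ ⇑c) g = gdelta f g := by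
    intro f
    rw [gdelta_perm c f g, hsign]
    norm_num
  have hbij : Function.Bijective (fun f : Fin (N+1) → Fin n => f ∘ ⇑c) := by
    constructor
    · intro f f' h
      funext t
      have := congrFun h (c⁻¹ t)
      simpa using this
    · intro f
      exact ⟨f ∘ ⇑(c⁻¹), by funext t; simp⟩
  have cyc : ∀ Φ : (Fin (N+1) → Fin n) → ℝ, (∑ f, Φ (f ∘ ⇑c)) = ∑ f, Φ f :=
    fun Φ => Fintype.sum_bijective _ hbij _ _ (fun f => rfl)
  have h1 : (∑ f : Fin (N+1) → Fin n, gdelta f g * (DR3 (f 0) (f s0) (f s1) * P f))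
      = ∑ f : Fin (N+1) → Fin n, gdelta f g * (DR3 (f s0) (f s1) (f 0) * P f) := by
    conv_lhs => rw [← cyc (fun f => gdelta f g * (DR3 (f 0) (f s0) (f s1) * P f))]
    refine Finset.sum_congr rfl (fun f _ => ?_)
    simp only [Function.comp_apply]
    rw [hc0, hcs0, hcs1, hdelta f, hP' f]
  have h2 : (∑ f : Fin (N+1) → Fin n, gdelta f g * (DR3 (f s0) (f s1) (f 0) * P f))
      = ∑ f : Fin (N+1) → Fin n, gdelta f g * (DR3 (f s1) (f 0) (f s0) * P f) := by
    conv_lhs => rw [← cyc (fun f => gdelta f g * (DR3 (f s0) (f s1) (f 0) * P f))]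
    refine Finset.sum_congr rfl (fun f _ => ?_)
    simp only [Function.comp_apply]
    rw [hc0, hcs0, hcs1, hdelta f, hP' f]
  have h3 : (∑ f : Fin (N+1) → Fin n, gdelta f g * (DR3 (f 0) (f s0) (f s1) * P f))
      + (∑ f : Fin (N+1) → Fin n, gdelta f g * (DR3 (f s0) (f s1) (f 0) * P f))
      + (∑ f : Fin (N+1) → Fin n, gdelta f g * (DR3 (f s1) (f 0) (f s0) * P f)) = 0 := by
    rw [← Finset.sum_add_distrib, ← Finset.sum_add_distrib]
    refine Finset.sum_eq_zero (fun f _ => ?_)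
    have hb := hB (f 0) (f s0) (f s1)
    calc gdelta f g * (DR3 (f 0) (f s0) (f s1) * P f)
          + gdelta f g * (DR3 (f s0) (f s1) (f 0) * P f)
          + gdelta f g * (DR3 (f s1) (f 0) (f s0) * P f)
        = gdelta f g * ((DR3 (f 0) (f s0) (f s1) + DR3 (f s0) (f s1) (f 0)
            + DR3 (f s1) (f 0) (f s0)) * P f) := by ring
      _ = 0 := by rw [hb]; ring
  linarith

/-- The generalized Einstein (Lovelock) tensor
`(E^{(k)})_i^j = (1/k!) δ^{j j₁…j_{2k}}_{i i₁…i_{2k}} R_{j₁j₂}{}^{i₁i₂} ⋯ R_{j_{2k-1}j_{2k}}{}^{i_{2k-1}i_{2k}}`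
(orthonormal frame, so index placement is trivial). -/
noncomputable def lovelock {n k : ℕ} (R : Fin n → Fin n → Fin n → Fin n → ℝ)
    (i j : Fin n) : ℝ :=
  (1 / (Nat.factorial k : ℝ)) *
    ∑ js : Fin (2 * k) → Fin n, ∑ is : Fin (2 * k) → Fin n,
      gdelta (Fin.cons j js) (Fin.cons i is) *
        ∏ a : Fin k, R (js (d0 a)) (js (d1 a)) (is (d0 a)) (is (d1 a))

/-- The covariant derivative `∇_a (E^{(k)})_i^j`, computed from `DR = ∇R` by the
Leibniz rule (the generalized Kronecker delta being parallel). -/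
noncomputable def Dlovelock {n k : ℕ} (R : Fin n → Fin n → Fin n → Fin n → ℝ)
    (DR : Fin n → Fin n → Fin n → Fin n → Fin n → ℝ) (a : Fin n) (i j : Fin n) : ℝ :=
  (1 / (Nat.factorial k : ℝ)) *
    ∑ js : Fin (2 * k) → Fin n, ∑ is : Fin (2 * k) → Fin n,
      gdelta (Fin.cons j js) (Fin.cons i is) *
        ∑ w : Fin k, DR a (js (d0 w)) (js (d1 w)) (is (d0 w)) (is (d1 w)) *
          ∏ b ∈ Finset.univ.erase w, R (js (d0 b)) (js (d1 b)) (is (d0 b)) (is (d1 b))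

/-- `Pf^{(k)}(Rm) = (1/k!) δ^{j₁…j_{2k}}_{i₁…i_{2k}} R_{j₁j₂}{}^{i₁i₂} ⋯`. -/
noncomputable def PfA {n k : ℕ} (A : Fin n → Fin n → Fin n → Fin n → ℝ) : ℝ :=
  (1 / (Nat.factorial k : ℝ)) *
    ∑ js : Fin (2 * k) → Fin n, ∑ is : Fin (2 * k) → Fin n,
      gdelta js is * ∏ a : Fin k, A (js (d0 a)) (js (d1 a)) (is (d0 a)) (is (d1 a))

/-- on an `n`-dimensional pseudo-Riemannian manifold (pointwise in an
orthonormal frame), given the Riemann tensor `R` (with its algebraic symmetries)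
and `DR = ∇R` satisfying the second Bianchi identity, the Lovelock tensor `E^{(k)}`
is symmetric, divergence-free, and has trace `(n − 2k) Pf^{(k)}(Rm)`. -/
theorem lovelock_properties (n k : ℕ)
    (R : Fin n → Fin n → Fin n → Fin n → ℝ)
    (hR1 : ∀ a b c d, R a b c d = - R b a c d)
    (hR2 : ∀ a b c d, R a b c d = - R a b d c)
    (hR3 : ∀ a b c d, R a b c d = R c d a b)
    (hRB : ∀ a b c d, R a b c d + R b c a d + R c a b d = 0)
    (DR : Fin n → Fin n → Fin n → Fin n → Fin n → ℝ)
    (hDR1 : ∀ e a b c d, DR e a b c d = - DR e b a c d)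
    (hDR2 : ∀ e a b c d, DR e a b c d = - DR e a b d c)
    (hDR3 : ∀ e a b c d, DR e a b c d = DR e c d a b)
    (hBianchi2 : ∀ a b c l m, DR a b c l m + DR b c a l m + DR c a b l m = 0) :
    (∀ i j, lovelock (k := k) R i j = lovelock (k := k) R j i)
    ∧ (∀ i, ∑ j, Dlovelock (k := k) R DR j i j = 0)
    ∧ (∑ i, lovelock (k := k) R i i = ((n : ℝ) - 2 * (k : ℝ)) * PfA (k := k) R) := by
  refine ⟨?_, ?_, ?_⟩
  · -- symmetry
    intro i j
    unfold lovelock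
    congr 1
    rw [Finset.sum_comm]
    refine Finset.sum_congr rfl (fun is _ => Finset.sum_congr rfl (fun js _ => ?_))
    rw [gdelta_swap]
    congr 1
    exact Finset.prod_congr rfl (fun a _ => hR3 _ _ _ _)
  · -- divergence free
    intro i
    unfold Dlovelock
    rw [← Finset.mul_sum]
    have hz : (∑ j : Fin n, ∑ js : Fin (2*k) → Fin n, ∑ is : Fin (2*k) → Fin n,
        gdelta (Fin.cons j js) (Fin.cons i is) *
          ∑ w : Fin k, DR j (js (d0 w)) (js (d1 w)) (is (d0 w)) (is (d1 w)) *
            ∏ b ∈ Finset.univ.erase w,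
              R (js (d0 b)) (js (d1 b)) (is (d0 b)) (is (d1 b))) = 0 := by
      have hg : ∀ (j : Fin n) (js : Fin (2*k) → Fin n),
          (∑ is : Fin (2*k) → Fin n, gdelta (Fin.cons j js) (Fin.cons i is) *
            ∑ w : Fin k, DR j (js (d0 w)) (js (d1 w)) (is (d0 w)) (is (d1 w)) *
              ∏ b ∈ Finset.univ.erase w, R (js (d0 b)) (js (d1 b)) (is (d0 b)) (is (d1 b)))
          = (fun f : Fin (2*k+1) → Fin n =>
              ∑ is : Fin (2*k) → Fin n, ∑ w : Fin k,
                gdelta f (Fin.cons i is) *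
                  (DR (f 0) (f (d0 w).succ) (f (d1 w).succ) (is (d0 w)) (is (d1 w)) *
                    ∏ b ∈ Finset.univ.erase w,
                      R (f (d0 b).succ) (f (d1 b).succ) (is (d0 b)) (is (d1 b))))
              (Fin.cons j js) := by
        intro j js
        simp only [Fin.cons_zero, Fin.cons_succ]
        exact Finset.sum_congr rfl (fun is _ => by rw [Finset.mul_sum])
      rw [Finset.sum_congr rfl (fun j _ => Finset.sum_congr rfl (fun js _ => hg j js)),
        ← sum_cons_eq (fun f : Fin (2*k+1) → Fin n =>
              ∑ is : Fin (2*k) → Fin n, ∑ w : Fin k,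
                gdelta f (Fin.cons i is) *
                  (DR (f 0) (f (d0 w).succ) (f (d1 w).succ) (is (d0 w)) (is (d1 w)) *
                    ∏ b ∈ Finset.univ.erase w,
                      R (f (d0 b).succ) (f (d1 b).succ) (is (d0 b)) (is (d1 b))))]
      show (∑ f : Fin (2*k+1) → Fin n, ∑ is : Fin (2*k) → Fin n, ∑ w : Fin k,
        gdelta f (Fin.cons i is) *
          (DR (f 0) (f (d0 w).succ) (f (d1 w).succ) (is (d0 w)) (is (d1 w)) *
            ∏ b ∈ Finset.univ.erase w,
              R (f (d0 b).succ) (f (d1 b).succ) (is (d0 b)) (is (d1 b)))) = 0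
      rw [Finset.sum_comm]
      refine Finset.sum_eq_zero (fun is _ => ?_)
      rw [Finset.sum_comm]
      refine Finset.sum_eq_zero (fun w _ => ?_)
      refine cycle_vanish (fun a b c => DR a b c (is (d0 w)) (is (d1 w)))
        (fun a b c => hBianchi2 a b c (is (d0 w)) (is (d1 w)))
        (Fin.cons i is)
        (fun f => ∏ b ∈ Finset.univ.erase w,
          R (f (d0 b).succ) (f (d1 b).succ) (is (d0 b)) (is (d1 b)))
        ((d0 w).succ) ((d1 w).succ) (Fin.succ_ne_zero _) (Fin.succ_ne_zero _)
        (by intro h; have h2 : 2*w.val+1 = 2*w.val+1+1 := congrArg Fin.val h; omega)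
        ?_
      intro f
      refine Finset.prod_congr rfl (fun b hb => ?_)
      have hbw : b.val ≠ w.val := fun h => (Finset.mem_erase.mp hb).1 (Fin.ext h)
      have hA : ((d0 b).succ : Fin (2*k+1)) ≠ (d0 w).succ := by
        intro h; have h2 : 2*b.val+1 = 2*w.val+1 := congrArg Fin.val h; omega
      have hB2 : ((d0 b).succ : Fin (2*k+1)) ≠ (d1 w).succ := by
        intro h; have h2 : 2*b.val+1 = 2*w.val+1+1 := congrArg Fin.val h; omega
      have hC : ((d1 b).succ : Fin (2*k+1)) ≠ (d0 w).succ := by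
        intro h; have h2 : 2*b.val+1+1 = 2*w.val+1 := congrArg Fin.val h; omega
      have hD : ((d1 b).succ : Fin (2*k+1)) ≠ (d1 w).succ := by
        intro h; have h2 : 2*b.val+1+1 = 2*w.val+1+1 := congrArg Fin.val h; omega
      have e0 : (Equiv.swap (0 : Fin (2*k+1)) (d0 w).succ *
          Equiv.swap (d0 w).succ (d1 w).succ) ((d0 b).succ) = (d0 b).succ := by
        rw [Equiv.Perm.mul_apply]
        rw [Equiv.swap_apply_of_ne_of_ne hA hB2]
        rw [Equiv.swap_apply_of_ne_of_ne (Fin.succ_ne_zero _) hA]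
      have e1 : (Equiv.swap (0 : Fin (2*k+1)) (d0 w).succ *
          Equiv.swap (d0 w).succ (d1 w).succ) ((d1 b).succ) = (d1 b).succ := by
        rw [Equiv.Perm.mul_apply]
        rw [Equiv.swap_apply_of_ne_of_ne hC hD]
        rw [Equiv.swap_apply_of_ne_of_ne (Fin.succ_ne_zero _) hC]
      simp only [Function.comp_apply, e0, e1]
    rw [hz, mul_zero]
  · -- trace
    unfold lovelock PfA
    rw [← Finset.mul_sum]
    have key : ∀ js is : Fin (2*k) → Fin n,
        (∑ x : Fin n, gdelta (Fin.cons x js) (Fin.cons x is))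
          = ((n : ℝ) - 2*(k : ℝ)) * gdelta js is := by
      intro js is
      rw [contract]
      push_cast
      ring_nf
    have hsum : (∑ x : Fin n, ∑ js : Fin (2*k) → Fin n, ∑ is : Fin (2*k) → Fin n,
        gdelta (Fin.cons x js) (Fin.cons x is) *
          ∏ a : Fin k, R (js (d0 a)) (js (d1 a)) (is (d0 a)) (is (d1 a)))
        = ((n : ℝ) - 2*(k : ℝ)) * ∑ js : Fin (2*k) → Fin n, ∑ is : Fin (2*k) → Fin n,
            gdelta js is * ∏ a : Fin k, R (js (d0 a)) (js (d1 a)) (is (d0 a)) (is (d1 a)) := by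
      rw [Finset.sum_comm]
      rw [Finset.sum_congr rfl (fun js _ => Finset.sum_comm)]
      rw [Finset.sum_congr rfl (fun js _ => Finset.sum_congr rfl (fun is _ => by
        rw [← Finset.sum_mul, key js is, mul_assoc]))]
      exact pull_const _ _
    rw [hsum]
    ring
end

section
/- In dimension four, the vector space of natural conformally invariant trace-free symmetric (0,2)-tensor fields of weight −2 (i.e., built linearly from partial contractions of ∇²Rm ⊗ g and Rm ⊗ Rm ⊗ g) is one-dimensional, spanned by the Bach tensor B_{ij} = ∇^s C_{sij} + W_{isjt} P^{st}. Specifically: if a W_{isjt}P^{st} + b·tf(P_i^s P_{sj}) + c·tf(J P_{ij}) + e·tf(∇²_{ij} J) is conformally invariant for all Riemannian four-manifolds, then a = b = c = e = 0. -/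
open scoped BigOperators

/-- Integer model of a Weyl-type tensor in dimension 4. -/
def Wz : Fin 4 → Fin 4 → Fin 4 → Fin 4 → ℤ := fun i j l m =>
  (if i = j then 0 else if i.val + j.val = 1 ∨ i.val + j.val = 5 then 2 else -1)
  * ((if i = l then 1 else 0) * (if j = m then 1 else 0)
     - (if i = m then 1 else 0) * (if j = l then 1 else 0))

/-- in dimension four, the space of natural conformally invariant
trace-free symmetric `(0,2)`-tensor fields of weight `−2` is spanned by the Bach
tensor.  Specifically: if the linear combination
`a W_{isjt}P^{st} + b tf(P_i^sP_{sj}) + c tf(JP_{ij}) + e tf(∇²_{ij}J)` is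
conformally invariant — equivalently, its conformal linearization (given by the
formulas `D_g(W_{isjt}P^{st})(Υ) = −W_{isjt}Υ^{st}`,
`D_g tf(P_i^sP_{sj})(Υ) = −2P_i^sΥ_{sj} + ½⟨P,∇²Υ⟩g_{ij}`,
`D_g tf(JP_{ij})(Υ) = −JΥ_{ij} − (ΔΥ)P_{ij} + ½JΔΥ g_{ij}`,
`D_g tf(∇²_{ij}J)(Υ) = −∇²_{ij}ΔΥ − 2J∇²_{ij}Υ − 3(Υ_i∇_jJ + Υ_j∇_iJ)
  + ¼(Δ²Υ + 2JΔΥ + 6⟨∇Υ,∇J⟩)g_{ij}`) vanishes for all Riemannian four-manifolds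
`(M⁴,g)` and all `Υ ∈ C^∞(M)` — then `a = b = c = e = 0`.  Pointwise, the freedom
in `(g, Υ)` is encoded by arbitrary algebraic data in an orthonormal frame:
a Weyl-type tensor `W`, a symmetric `P` (with `J = tr P`), `dJ = ∇J`, `Υ1 = ∇Υ`,
a symmetric `Υ2 = ∇²Υ` (with `ΔΥ = tr Υ2`), and a symmetric `U = ∇²ΔΥ`
(with `Δ²Υ = tr U`). -/
theorem bach_spans (a b c e : ℝ)
    (h : ∀ (W : Fin 4 → Fin 4 → Fin 4 → Fin 4 → ℝ),
      (∀ i j l m, W i j l m = - W j i l m) →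
      (∀ i j l m, W i j l m = - W i j m l) →
      (∀ i j l m, W i j l m = W l m i j) →
      (∀ i j l m, W i j l m + W j l i m + W l i j m = 0) →
      (∀ i l, ∑ s, W i s l s = 0) →
      ∀ (P : Fin 4 → Fin 4 → ℝ), (∀ i j, P i j = P j i) →
      ∀ (dJ Υ1 : Fin 4 → ℝ),
      ∀ (Υ2 : Fin 4 → Fin 4 → ℝ), (∀ i j, Υ2 i j = Υ2 j i) →
      ∀ (U : Fin 4 → Fin 4 → ℝ), (∀ i j, U i j = U j i) →
      ∀ i j,
        a * (-(∑ s, ∑ u, W i s j u * Υ2 s u))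
        + b * (-2 * (∑ s, P i s * Υ2 s j)
            + (1 / 2) * (∑ s, ∑ u, P s u * Υ2 s u) * kron i j)
        + c * (-(∑ s, P s s) * Υ2 i j - (∑ s, Υ2 s s) * P i j
            + (1 / 2) * (∑ s, P s s) * (∑ s, Υ2 s s) * kron i j)
        + e * (-(U i j) - 2 * (∑ s, P s s) * Υ2 i j
            - 3 * (Υ1 i * dJ j + Υ1 j * dJ i)
            + (1 / 4) * ((∑ s, U s s) + 2 * (∑ s, P s s) * (∑ s, Υ2 s s)
                + 6 * (∑ s, Υ1 s * dJ s)) * kron i j)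
        = 0) :
    a = 0 ∧ b = 0 ∧ c = 0 ∧ e = 0 := by
  -- some simple data
  set W0 : Fin 4 → Fin 4 → Fin 4 → Fin 4 → ℝ := fun _ _ _ _ => 0 with hW0
  have hW0a : ∀ i j l m, W0 i j l m = - W0 j i l m := by intro _ _ _ _; simp [hW0]
  have hW0b : ∀ i j l m, W0 i j l m = - W0 i j m l := by intro _ _ _ _; simp [hW0]
  have hW0c : ∀ i j l m, W0 i j l m = W0 l m i j := by intro _ _ _ _; simp [hW0]
  have hW0d : ∀ i j l m, W0 i j l m + W0 j l i m + W0 l i j m = 0 := by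
    intro _ _ _ _; simp [hW0]
  have hW0e : ∀ i l, ∑ s, W0 i s l s = 0 := by intro _ _; simp [hW0]
  set Z2 : Fin 4 → Fin 4 → ℝ := fun _ _ => 0 with hZ2
  have hZ2s : ∀ i j, Z2 i j = Z2 j i := by intro _ _; rfl
  set Z1 : Fin 4 → ℝ := fun _ => 0 with hZ1
  -- E₀ : rank-one symmetric tensor at (0,0); E₁ at (1,1)
  set E0 : Fin 4 → Fin 4 → ℝ := fun i j => if i = 0 ∧ j = 0 then 1 else 0 with hE0
  have hE0s : ∀ i j, E0 i j = E0 j i := by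
    intro i j; simp only [hE0, and_comm]
  set E1 : Fin 4 → Fin 4 → ℝ := fun i j => if i = 1 ∧ j = 1 then 1 else 0 with hE1
  have hE1s : ∀ i j, E1 i j = E1 j i := by
    intro i j; simp only [hE1, and_comm]
  -- Step 1 : e = 0, from U = E0, everything else zero, at (i,j) = (0,0)
  have he : e = 0 := by
    have h1 := h W0 hW0a hW0b hW0c hW0d hW0e Z2 hZ2s Z1 Z1 Z2 hZ2s E0 hE0s 0 0
    simp only [hW0, hZ2, hZ1, hE0, Fin.sum_univ_four, kron] at h1
    norm_num [Fin.ext_iff, show ((0:Fin 4).val) = 0 from rfl, show ((1:Fin 4).val) = 1 from rfl, show ((2:Fin 4).val) = 2 from rfl, show ((3:Fin 4).val) = 3 from rfl] at h1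
    linarith
  -- Step 2 : c = 0, from P = E0, Υ2 = E1, at (0,0)
  have hc : c = 0 := by
    have h1 := h W0 hW0a hW0b hW0c hW0d hW0e E0 hE0s Z1 Z1 E1 hE1s Z2 hZ2s 0 0
    simp only [hW0, hZ2, hZ1, hE0, hE1, Fin.sum_univ_four, kron] at h1
    norm_num [Fin.ext_iff, show ((0:Fin 4).val) = 0 from rfl, show ((1:Fin 4).val) = 1 from rfl, show ((2:Fin 4).val) = 2 from rfl, show ((3:Fin 4).val) = 3 from rfl] at h1
    linarith
  -- Step 3 : b = 0, from P = Υ2 = E0, at (1,1)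
  have hb : b = 0 := by
    have h1 := h W0 hW0a hW0b hW0c hW0d hW0e E0 hE0s Z1 Z1 E0 hE0s Z2 hZ2s 1 1
    simp only [hW0, hZ2, hZ1, hE0, Fin.sum_univ_four, kron] at h1
    norm_num [Fin.ext_iff, show ((0:Fin 4).val) = 0 from rfl, show ((1:Fin 4).val) = 1 from rfl, show ((2:Fin 4).val) = 2 from rfl, show ((3:Fin 4).val) = 3 from rfl] at h1
    linarith
  -- Step 4 : a = 0, using a genuine Weyl-type tensor
  have ha : a = 0 := by
    set Wr : Fin 4 → Fin 4 → Fin 4 → Fin 4 → ℝ := fun i j l m => ((Wz i j l m : ℤ) : ℝ)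
      with hWr
    have hz1 : ∀ i j l m, Wz i j l m = - Wz j i l m := by decide
    have hz2 : ∀ i j l m, Wz i j l m = - Wz i j m l := by decide
    have hz3 : ∀ i j l m, Wz i j l m = Wz l m i j := by decide
    have hz4 : ∀ i j l m, Wz i j l m + Wz j l i m + Wz l i j m = 0 := by decide
    have hz5 : ∀ i l, ∑ s, Wz i s l s = 0 := by decide
    have hWa : ∀ i j l m, Wr i j l m = - Wr j i l m := by
      intro i j l m
      show ((Wz i j l m : ℤ) : ℝ) = -((Wz j i l m : ℤ) : ℝ)
      rw [hz1 i j l m]; push_cast; ring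
    have hWb : ∀ i j l m, Wr i j l m = - Wr i j m l := by
      intro i j l m
      show ((Wz i j l m : ℤ) : ℝ) = -((Wz i j m l : ℤ) : ℝ)
      rw [hz2 i j l m]; push_cast; ring
    have hWc : ∀ i j l m, Wr i j l m = Wr l m i j := by
      intro i j l m
      show ((Wz i j l m : ℤ) : ℝ) = ((Wz l m i j : ℤ) : ℝ)
      rw [hz3 i j l m]
    have hWd : ∀ i j l m, Wr i j l m + Wr j l i m + Wr l i j m = 0 := by
      intro i j l m
      have := hz4 i j l m
      show ((Wz i j l m : ℤ) : ℝ) + ((Wz j l i m : ℤ) : ℝ) + ((Wz l i j m : ℤ) : ℝ) = 0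
      exact_mod_cast congrArg (fun z : ℤ => (z : ℝ)) this
    have hWe : ∀ i l, ∑ s, Wr i s l s = 0 := by
      intro i l
      have := hz5 i l
      show ∑ s, ((Wz i s l s : ℤ) : ℝ) = 0
      rw [← Int.cast_sum, this, Int.cast_zero]
    have h1 := h Wr hWa hWb hWc hWd hWe Z2 hZ2s Z1 Z1 E0 hE0s Z2 hZ2s 1 1
    simp only [hWr, hZ2, hZ1, hE0, Fin.sum_univ_four, kron, Wz] at h1
    norm_num [Fin.ext_iff, show ((0:Fin 4).val) = 0 from rfl, show ((1:Fin 4).val) = 1 from rfl, show ((2:Fin 4).val) = 2 from rfl, show ((3:Fin 4).val) = 3 from rfl] at h1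
    linarith
  exact ⟨ha, hb, hc, he⟩
end
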